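/- On the half-line x > 0, the rescaled ghost bracket ⟨f,g⟩ := −2(f,g) on F_{−1/2}, applied to the basis elements V_n = (x^{n+1/2}, 0) and Ψ_n = (x^n, 1) of weight −1/2, satisfies the relations ⟨V_n,V_m⟩ = (m−n)·Ψ_{n+m}, ⟨Ψ_n,V_m⟩ = V_{n+m} = −⟨V_m,Ψ_n⟩, and ⟨Ψ_n,Ψ_m⟩ = 2·Ψ_{n+m}, for all integers n, m. -/

import Mathlib

/-- Homogeneous superfunction on the supercircle `S^{1|1}`:
a pair `(f, ε)` representing `f(x)` if `ε = 0` and `ξ·f(x)` if `ε = 1`. -/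
structure SF where
  fn : ℝ → ℝ
  par : ZMod 2

/-- Product of homogeneous superfunctions: `(f,ε)·(g,δ) = (f·g, ε+δ)`,
with `(f,1)·(g,1) = 0` since `ξ² = 0`. -/
noncomputable def SF.mul (f g : SF) : SF :=
  ⟨fun x => if f.par = 1 ∧ g.par = 1 then 0 else f.fn x * g.fn x, f.par + g.par⟩

noncomputable def SF.smul (c : ℝ) (f : SF) : SF := ⟨fun x => c * f.fn x, f.par⟩

noncomputable def SF.add (f g : SF) : SF := ⟨fun x => f.fn x + g.fn x, f.par⟩

noncomputable def SF.sub (f g : SF) : SF := ⟨fun x => f.fn x - g.fn x, f.par⟩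

noncomputable def SF.neg (f : SF) : SF := ⟨fun x => - f.fn x, f.par⟩

/-- Even derivative `(f,ε)' = (f',ε)`. -/
noncomputable def SF.dx (f : SF) : SF := ⟨deriv f.fn, f.par⟩

/-- The odd derivative `D̄ = ∂_ξ - ξ ∂_x`: `D̄(f,0) = (-f',1)`, `D̄(f,1) = (f,0)`. -/
noncomputable def Dbar (f : SF) : SF :=
  if f.par = 0 then ⟨fun x => - deriv f.fn x, 1⟩ else ⟨f.fn, 0⟩

/-- `(-1)^ε`. -/
def sgn (e : ZMod 2) : ℝ := if e = 0 then 1 else -1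

/-- `(-1)^(a·b)`. -/
def sgn2 (a b : ZMod 2) : ℝ := if a = 1 ∧ b = 1 then -1 else 1

/-- The first supertransvectant (contact bracket)
`[f,g] = μ f′ g − λ f g′ − (−1)^{σ(f)} (1/2) D̄(f)·D̄(g)` on `F_λ ⊗ F_μ`. -/
noncomputable def cbr (l m : ℝ) (f g : SF) : SF :=
  SF.sub (SF.sub (SF.smul m (SF.mul f.dx g)) (SF.smul l (SF.mul f g.dx)))
    (SF.smul (sgn f.par * (1/2)) (SF.mul (Dbar f) (Dbar g)))

/-- The odd supertransvectant (ghost bracket)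
`(f,g) = μ D̄(f)·g − (−1)^{σ(f)} λ f·D̄(g)` on `F_λ ⊗ F_μ`. -/
noncomputable def gbr (l m : ℝ) (f g : SF) : SF :=
  SF.sub (SF.smul m (SF.mul (Dbar f) g)) (SF.smul (sgn f.par * l) (SF.mul f (Dbar g)))


/-- Equality of superfunctions on the half-line `x > 0`. -/
def SF.eqPos (f g : SF) : Prop := f.par = g.par ∧ ∀ x : ℝ, 0 < x → f.fn x = g.fn x

/-- The even basis elements `V_n = (x^{n+1/2}, 0)` of `F_{-1/2}`. -/
noncomputable def V (n : ℤ) : SF := ⟨fun x => x ^ ((n : ℝ) + 1/2), 0⟩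

/-- The odd basis elements `Ψ_n = (x^n, 1)` of `F_{-1/2}`. -/
noncomputable def Psi (n : ℤ) : SF := ⟨fun x => x ^ n, 1⟩

/-- The rescaled ghost bracket `⟨f,g⟩ = −2(f,g)` on `F_{-1/2}`. -/
noncomputable def ghalf (f g : SF) : SF := SF.smul (-2) (gbr (-(1/2)) (-(1/2)) f g)

/-- on the half-line `x > 0`, the rescaled ghost bracket on `F_{-1/2}`
satisfies `⟨V_n,V_m⟩ = (m−n)Ψ_{n+m}`, `⟨Ψ_n,V_m⟩ = V_{n+m} = −⟨V_m,Ψ_n⟩` and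
`⟨Ψ_n,Ψ_m⟩ = 2Ψ_{n+m}` for all integers `n`, `m`. -/
lemma derivV (n : ℤ) {x : ℝ} (hx : 0 < x) :
    deriv (fun y : ℝ => y ^ ((n : ℝ) + 1/2)) x = ((n:ℝ)+1/2) * x ^ ((n:ℝ) - 1/2) := by
  rw [Real.deriv_rpow_const (x := x),
    show ((n:ℝ)+1/2)-1 = (n:ℝ)-1/2 by ring]

theorem ghost_bracket_on_basis (n m : ℤ) :
    SF.eqPos (ghalf (V n) (V m)) (SF.smul ((m : ℝ) - (n : ℝ)) (Psi (n + m))) ∧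
    SF.eqPos (ghalf (Psi n) (V m)) (V (n + m)) ∧
    SF.eqPos (ghalf (V m) (Psi n)) (SF.neg (V (n + m))) ∧
    SF.eqPos (ghalf (Psi n) (Psi m)) (SF.smul 2 (Psi (n + m))) := by
  have hone : (1 : ZMod 2) ≠ 0 := by decide
  have hzero : (0 : ZMod 2) ≠ 1 := by decide
  have hadd : (1 : ZMod 2) + 1 = 0 := by decide
  refine ⟨⟨?_, ?_⟩, ⟨?_, ?_⟩, ⟨?_, ?_⟩, ⟨?_, ?_⟩⟩
  · simp [ghalf, gbr, SF.smul, SF.sub, SF.mul, Dbar, V, Psi]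
  · intro x hx
    have hz : (x:ℝ) ^ ((n+m):ℤ) = x ^ ((n:ℝ)+(m:ℝ)) := by
      rw [← Real.rpow_intCast, Int.cast_add]
    have h1 : x ^ ((n:ℝ)-1/2) * x ^ ((m:ℝ)+1/2) = x ^ ((n:ℝ)+(m:ℝ)) := by
      rw [← Real.rpow_add hx]; ring_nf
    have h2 : x ^ ((n:ℝ)+1/2) * x ^ ((m:ℝ)-1/2) = x ^ ((n:ℝ)+(m:ℝ)) := by
      rw [← Real.rpow_add hx]; ring_nf
    simp only [ghalf, gbr, SF.smul, SF.sub, SF.mul, Dbar, V, Psi, sgn, hone, hzero, hadd,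
      if_true, if_false, reduceIte]
    rw [derivV n hx, derivV m hx, hz]
    simp only [hone, hzero, hadd, and_false, false_and, if_false]
    linear_combination (-((n:ℝ)+1/2)) * h1 + ((m:ℝ)+1/2) * h2
  · simp [ghalf, gbr, SF.smul, SF.sub, SF.mul, Dbar, V, Psi, hone]
  · intro x hx
    have hz : (x:ℝ) ^ (n:ℤ) = x ^ ((n:ℝ)) := (Real.rpow_intCast x n).symm
    have h1 : x ^ ((n:ℝ)) * x ^ ((m:ℝ)+1/2) = x ^ (((n:ℝ)+(m:ℝ))+1/2) := by
      rw [← Real.rpow_add hx]; ring_nf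
    simp only [ghalf, gbr, SF.smul, SF.sub, SF.mul, Dbar, V, Psi, sgn, hone, hzero, hadd,
      if_true, if_false, reduceIte]
    simp only [hone, hzero, hadd, and_false, false_and, and_true, true_and, if_false, if_true,
      reduceIte, Int.cast_add]
    rw [hz]
    linear_combination h1
  · simp [ghalf, gbr, SF.smul, SF.sub, SF.mul, SF.neg, Dbar, V, Psi, hone, hadd]
  · intro x hx
    have hz : (x:ℝ) ^ (n:ℤ) = x ^ ((n:ℝ)) := (Real.rpow_intCast x n).symm
    have h1 : x ^ ((m:ℝ)+1/2) * x ^ ((n:ℝ)) = x ^ (((n:ℝ)+(m:ℝ))+1/2) := by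
      rw [← Real.rpow_add hx]; ring_nf
    simp only [ghalf, gbr, SF.smul, SF.sub, SF.mul, SF.neg, Dbar, V, Psi, sgn, hone, hzero, hadd,
      if_true, if_false, reduceIte]
    simp only [hone, hzero, hadd, and_false, false_and, and_true, true_and, if_false, if_true,
      reduceIte, Int.cast_add]
    rw [hz]
    linear_combination -h1
  · simp [ghalf, gbr, SF.smul, SF.sub, SF.mul, Dbar, V, Psi, hone]
  · intro x hx
    have h1 : x ^ (n+m) = x ^ n * x ^ m := zpow_add₀ hx.ne' n m
    simp only [ghalf, gbr, SF.smul, SF.sub, SF.mul, Dbar, V, Psi, sgn, hone, hzero, hadd,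
      if_true, if_false, reduceIte]
    simp only [hone, hzero, hadd, and_false, false_and, and_true, true_and, if_false, if_true,
      reduceIte]
    rw [h1]
    ring
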